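/- Consider the Markov chain on states {a, b, c} where from b the system moves to a with probability 1 and reward 0; from a it moves to c with probability 1/n (reward −1) and to b with probability 1 − 1/n (reward 0); c is absorbing with reward 0. Then the total expected reward starting from a equals −1 (the chain reaches c with probability 1), while sup over n of the one-step value tends to 0, so F(a) = sup_s F_s(a) = 0 is not attained. -/

import Mathlib

open Filter Topology

lemma hasProd_iInf (f : ℕ → ℝ) (h0 : ∀ k, 0 ≤ f k) (h1 : ∀ k, f k ≤ 1) :
    HasProd f (⨅ s : Finset ℕ, ∏ i ∈ s, f i) := by
  have hanti : Antitone (fun s : Finset ℕ => ∏ i ∈ s, f i) := by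
    intro s t hst
    calc ∏ i ∈ t, f i = (∏ i ∈ t \ s, f i) * ∏ i ∈ s, f i := (Finset.prod_sdiff hst).symm
    _ ≤ 1 * ∏ i ∈ s, f i := by
        apply mul_le_mul_of_nonneg_right
        · exact Finset.prod_le_one (fun i _ => h0 i) (fun i _ => h1 i)
        · exact Finset.prod_nonneg fun i _ => h0 i
    _ = ∏ i ∈ s, f i := one_mul _
  have hb : BddBelow (Set.range fun s : Finset ℕ => ∏ i ∈ s, f i) := by
    refine ⟨0, ?_⟩
    rintro x ⟨s, rfl⟩
    exact Finset.prod_nonneg fun i _ => h0 i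
  exact tendsto_atTop_ciInf hanti hb

lemma one_sub_sum_le_prod (s : Finset ℕ) (g : ℕ → ℝ) (h0 : ∀ k, 0 ≤ g k)
    (h1 : ∀ k, g k ≤ 1) : 1 - ∑ i ∈ s, (1 - g i) ≤ ∏ i ∈ s, g i := by
  classical
  induction s using Finset.induction with
  | empty => simp
  | insert a s hx ih =>
    rw [Finset.sum_insert hx, Finset.prod_insert hx]
    have hS : 0 ≤ ∑ i ∈ s, (1 - g i) := Finset.sum_nonneg fun i _ => by linarith [h1 i]
    have := mul_le_mul_of_nonneg_left ih (h0 a)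
    nlinarith [h0 a, h1 a]

lemma bounds (σ : ℕ → ℕ) (hσ : ∀ k, 1 ≤ σ k) :
    (∏' k : ℕ, (1 - 1 / (σ k : ℝ))) = ⨅ s : Finset ℕ, ∏ i ∈ s, (1 - 1 / (σ i : ℝ)) ∧
    (0:ℝ) ≤ ⨅ s : Finset ℕ, ∏ i ∈ s, (1 - 1 / (σ i : ℝ)) := by
  have h0 : ∀ k, (0:ℝ) ≤ 1 - 1 / (σ k : ℝ) := by
    intro k
    have h1k : (1:ℝ) ≤ (σ k : ℝ) := by exact_mod_cast hσ k
    have : 1 / (σ k : ℝ) ≤ 1 := by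
      rw [div_le_one (by linarith)]; linarith
    linarith
  have h1 : ∀ k, (1 - 1 / (σ k : ℝ)) ≤ 1 := by
    intro k
    have h1k : (0:ℝ) < (σ k : ℝ) := by exact_mod_cast hσ k
    have : 0 ≤ 1 / (σ k : ℝ) := by positivity
    linarith
  have hp := hasProd_iInf _ h0 h1
  exact ⟨hp.tprod_eq, le_ciInf fun s => Finset.prod_nonneg fun i _ => h0 i⟩



/-- Ornstein's negative-reward example on states `{a, b, c}`: from `b` move to `a`
(reward 0); from `a` move to `c` with probability `1/n` (reward `-1`) or back to `b`
with probability `1 - 1/n` (reward 0); `c` is absorbing (reward 0).  A strategy picks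
the parameter `n = σ k ≥ 1` at the `k`-th visit to `a`.  Its expected total reward
from `a` is minus the probability of ever reaching `c`, namely
`(∏_k (1 - 1/σ k)) - 1`. -/
noncomputable def ornVal (σ : ℕ → ℕ) : ℝ :=
  (∏' k : ℕ, (1 - 1 / (σ k : ℝ))) - 1

/-- Under each constant strategy the chain reaches `c` with probability 1 and the total
expected reward from `a` equals `-1`; nevertheless `F(a) = sup_σ F_σ(a) = 0`, and this
supremum is attained by no strategy. -/
theorem ornstein_negative_example :
    (∀ n : ℕ, 1 ≤ n → ornVal (fun _ => n) = -1) ∧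
      IsLUB {v : ℝ | ∃ σ : ℕ → ℕ, (∀ k, 1 ≤ σ k) ∧ v = ornVal σ} 0 ∧
      (∀ σ : ℕ → ℕ, (∀ k, 1 ≤ σ k) → ornVal σ < 0) := by
  have hb : ∀ σ : ℕ → ℕ, (∀ k, 1 ≤ σ k) →
      BddBelow (Set.range fun s : Finset ℕ => ∏ i ∈ s, (1 - 1 / (σ i : ℝ))) := by
    intro σ hσ
    refine ⟨0, ?_⟩
    rintro x ⟨s, rfl⟩
    refine Finset.prod_nonneg fun i _ => ?_
    have h1k : (1:ℝ) ≤ (σ i : ℝ) := by exact_mod_cast hσ i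
    have : 1 / (σ i : ℝ) ≤ 1 := by rw [div_le_one (by linarith)]; linarith
    linarith
  have hneg : ∀ σ : ℕ → ℕ, (∀ k, 1 ≤ σ k) → ornVal σ < 0 := by
    intro σ hσ
    obtain ⟨heq, _⟩ := bounds σ hσ
    have hle : (⨅ s : Finset ℕ, ∏ i ∈ s, (1 - 1 / (σ i : ℝ))) ≤
        ∏ i ∈ ({0} : Finset ℕ), (1 - 1 / (σ i : ℝ)) := ciInf_le (hb σ hσ) _
    have h1k : (1:ℝ) ≤ (σ 0 : ℝ) := by exact_mod_cast hσ 0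
    have hpos : 0 < 1 / (σ 0 : ℝ) := by positivity
    rw [Finset.prod_singleton] at hle
    rw [ornVal, heq]
    linarith
  refine ⟨?_, ⟨?_, ?_⟩, hneg⟩
  · -- constant strategy
    intro n hn
    obtain ⟨heq, hnn⟩ := bounds (fun _ => n) (fun _ => hn)
    set c : ℝ := 1 - 1 / (n : ℝ) with hc
    have h1n : (1:ℝ) ≤ (n : ℝ) := by exact_mod_cast hn
    have hc0 : 0 ≤ c := by
      have : 1 / (n : ℝ) ≤ 1 := by rw [div_le_one (by linarith)]; linarith
      rw [hc]; linarith
    have hc1 : c < 1 := by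
      have : 0 < 1 / (n : ℝ) := by positivity
      rw [hc]; linarith
    have hle : ∀ k : ℕ, (⨅ s : Finset ℕ, ∏ i ∈ s, c) ≤ c ^ k := by
      intro k
      calc (⨅ s : Finset ℕ, ∏ i ∈ s, c) ≤ ∏ i ∈ Finset.range k, c :=
            ciInf_le (hb (fun _ => n) (fun _ => hn)) (Finset.range k)
        _ = c ^ k := by rw [Finset.prod_const, Finset.card_range]
    have htend : Tendsto (fun k : ℕ => c ^ k) atTop (𝓝 0) :=
      tendsto_pow_atTop_nhds_zero_of_lt_one hc0 hc1
    have h0 : (⨅ s : Finset ℕ, ∏ i ∈ s, c) ≤ 0 :=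
      ge_of_tendsto htend (Filter.Eventually.of_forall hle)
    have : (⨅ s : Finset ℕ, ∏ i ∈ s, c) = 0 := le_antisymm h0 hnn
    rw [ornVal]
    simp only [← hc] at heq ⊢
    rw [heq, this]; ring
  · -- 0 is an upper bound
    rintro v ⟨σ, hσ, rfl⟩
    exact le_of_lt (hneg σ hσ)
  · -- 0 is least
    intro b hub
    have key : ∀ m : ℕ, -2 * (1/2 : ℝ) ^ m ≤ b := by
      intro m
      set σ : ℕ → ℕ := fun k => 2 ^ (k + m) with hσdef
      have hσ : ∀ k, 1 ≤ σ k := fun k => Nat.one_le_two_pow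
      obtain ⟨heq, _⟩ := bounds σ hσ
      have hmem : ornVal σ ∈ {v : ℝ | ∃ σ : ℕ → ℕ, (∀ k, 1 ≤ σ k) ∧ v = ornVal σ} :=
        ⟨σ, hσ, rfl⟩
      have hvb := hub hmem
      -- lower bound on the infimum
      have hlow : (1 : ℝ) - 2 * (1/2) ^ m ≤
          ⨅ s : Finset ℕ, ∏ i ∈ s, (1 - 1 / (σ i : ℝ)) := by
        refine le_ciInf fun s => ?_
        have h0 : ∀ k, (0:ℝ) ≤ 1 - 1 / (σ k : ℝ) := by
          intro k
          have h1k : (1:ℝ) ≤ (σ k : ℝ) := by exact_mod_cast hσ k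
          have : 1 / (σ k : ℝ) ≤ 1 := by rw [div_le_one (by linarith)]; linarith
          linarith
        have h1 : ∀ k, (1 - 1 / (σ k : ℝ)) ≤ 1 := by
          intro k
          have h1k : (0:ℝ) < (σ k : ℝ) := by exact_mod_cast hσ k
          have : 0 ≤ 1 / (σ k : ℝ) := by positivity
          linarith
        have hkey := one_sub_sum_le_prod s _ h0 h1
        have hsum : ∑ i ∈ s, (1 - (1 - 1 / (σ i : ℝ))) ≤ 2 * (1/2) ^ m := by
          have : ∀ i, (1 - (1 - 1 / (σ i : ℝ))) = (1/2:ℝ) ^ m * (1/2) ^ i := by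
            intro i
            simp only [hσdef]
            push_cast
            rw [pow_add]
            ring_nf
            simp only [one_div]
          rw [Finset.sum_congr rfl fun i _ => this i, ← Finset.mul_sum]
          have hsle : ∑ i ∈ s, (1/2:ℝ) ^ i ≤ 2 := by
            have := Summable.sum_le_tsum s (fun i _ => by positivity)
              (summable_geometric_of_lt_one (by norm_num : (0:ℝ) ≤ 1/2) (by norm_num))
            calc ∑ i ∈ s, (1/2:ℝ) ^ i ≤ ∑' i : ℕ, (1/2:ℝ) ^ i := this
              _ = 2 := by
                rw [tsum_geometric_of_lt_one (by norm_num) (by norm_num)]; norm_num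
          have hm : (0:ℝ) ≤ (1/2:ℝ) ^ m := by positivity
          calc (1/2:ℝ) ^ m * ∑ i ∈ s, (1/2:ℝ) ^ i ≤ (1/2) ^ m * 2 :=
                mul_le_mul_of_nonneg_left hsle hm
            _ = 2 * (1/2) ^ m := by ring
        linarith
      have : -2 * (1/2:ℝ) ^ m ≤ ornVal σ := by
        rw [ornVal, heq]; linarith
      linarith
    have htend : Tendsto (fun m : ℕ => -2 * (1/2 : ℝ) ^ m) atTop (𝓝 0) := by
      have := (tendsto_pow_atTop_nhds_zero_of_lt_one
        (by norm_num : (0:ℝ) ≤ 1/2) (by norm_num)).const_mul (-2 : ℝ)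
      simpa using this
    exact le_of_tendsto htend (Filter.Eventually.of_forall key)
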